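/- arXiv:1506.06842 — 2 statements merged into one kernel-verified Lean document; each statement's English description precedes it below -/
import Mathlib

section
/- For complex shifts α, β, γ, δ with all of Re(α+γ), Re(α+δ), Re(β+γ), Re(β+δ) greater than 0, the Dirichlet series ∑_{n=1}^∞ τ_{α,β}(n) τ_{γ,δ}(n) n^{−1} converges and equals ζ(1+α+γ) ζ(1+α+δ) ζ(1+β+γ) ζ(1+β+δ) / ζ(2+α+β+γ+δ). -/
open Complex

/-- The generalized divisor function `τ_{α,β}(n) = ∑_{hk=n} h^{−α} k^{−β}`. -/
noncomputable def tauShift (α β : ℂ) (n : ℕ) : ℂ :=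
  ∑ p ∈ n.divisorsAntidiagonal, (p.1 : ℂ) ^ (-α) * (p.2 : ℂ) ^ (-β)

section TauAuxSection
open Complex LSeries ArithmeticFunction
open scoped ArithmeticFunction.Moebius ArithmeticFunction.zeta

namespace TauAux

/-- zeta-type term -/
noncomputable def zterm (c : ℂ) (n : ℕ) : ℂ := if n = 0 then 0 else (n : ℂ) ^ (-(1 + c))

/-- moebius-type term -/
noncomputable def mterm (s : ℂ) (n : ℕ) : ℂ :=
  if n = 0 then 0 else (μ n : ℂ) * (n : ℂ) ^ (-s)

lemma zterm_ne (c : ℂ) {n : ℕ} (hn : n ≠ 0) : zterm c n = (n : ℂ) ^ (-(1 + c)) := if_neg hn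

lemma hasSum_zterm {c : ℂ} (hc : 0 < c.re) : HasSum (zterm c) (riemannZeta (1 + c)) := by
  have h : 1 < (1 + c).re := by simp [Complex.add_re]; linarith
  have h2 := LSeriesHasSum_one h
  unfold LSeriesHasSum at h2
  have he : zterm c = term 1 (1 + c) := by
    funext n
    rcases eq_or_ne n 0 with rfl | hn
    · simp [zterm]
    · rw [zterm_ne _ hn, term_of_ne_zero hn, Pi.one_apply, cpow_neg, one_div]
  rw [he]; exact h2

lemma summable_norm_zterm {c : ℂ} (hc : 0 < c.re) : Summable fun n => ‖zterm c n‖ := by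
  have hs : Summable fun n : ℕ => (n : ℝ) ^ (-(1 + c.re)) :=
    Real.summable_nat_rpow.mpr (by linarith)
  refine Summable.of_nonneg_of_le (fun _ => norm_nonneg _) (fun n => ?_) hs
  rcases eq_or_ne n 0 with rfl | hn
  · simp [zterm]
    positivity
  · rw [zterm_ne _ hn, norm_natCast_cpow_of_pos (Nat.pos_of_ne_zero hn)]
    simp [Complex.add_re]

lemma hasSum_mterm {s : ℂ} (hs : 1 < s.re) : HasSum (mterm s) (riemannZeta s)⁻¹ := by
  have hsum : LSeriesSummable (fun n => ((μ n : ℤ) : ℂ)) s := LSeriesSummable_moebius_iff.mpr hs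
  have h1 : LSeries (fun n => ((ζ n : ℕ) : ℂ)) s * LSeries (fun n => ((μ n : ℤ) : ℂ)) s = 1 :=
    LSeries_zeta_mul_Lseries_moebius hs
  rw [LSeries_zeta_eq_riemannZeta hs] at h1
  have hv : (riemannZeta s)⁻¹ = LSeries (fun n => ((μ n : ℤ) : ℂ)) s := inv_eq_of_mul_eq_one_right h1
  have h2 := hsum.LSeriesHasSum
  rw [← hv] at h2
  unfold LSeriesHasSum at h2
  have he : mterm s = term (fun n => ((μ n : ℤ) : ℂ)) s := by
    funext n
    rcases eq_or_ne n 0 with rfl | hn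
    · simp [mterm]
    · simp [mterm, hn, term_of_ne_zero hn, cpow_neg, div_eq_mul_inv]
  rw [he]; exact h2

lemma summable_norm_mterm {s : ℂ} (hs : 1 < s.re) : Summable fun n => ‖mterm s n‖ := by
  have hsum : Summable fun n : ℕ => (n : ℝ) ^ (-s.re) :=
    Real.summable_nat_rpow.mpr (by linarith)
  refine Summable.of_nonneg_of_le (fun _ => norm_nonneg _) (fun n => ?_) hsum
  rcases eq_or_ne n 0 with rfl | hn
  · simp [mterm]; positivity
  · rw [show mterm s n = (μ n : ℂ) * (n : ℂ) ^ (-s) from if_neg hn, norm_mul,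
      norm_natCast_cpow_of_pos (Nat.pos_of_ne_zero hn)]
    have h2 : ‖((μ n : ℤ) : ℂ)‖ ≤ 1 := by
      have := abs_moebius_le_one (n := n)
      rw [Complex.norm_intCast]
      exact_mod_cast this
    calc ‖(μ n : ℂ)‖ * (n:ℝ) ^ (-s).re ≤ 1 * (n:ℝ) ^ (-s).re := by
          apply mul_le_mul_of_nonneg_right h2 (Real.rpow_nonneg (Nat.cast_nonneg n) _)
      _ = (n:ℝ) ^ (-s.re) := by simp


/-- Regrouping an absolutely convergent sum along the fibers of a map `π`,
where each fiber (intersected with the support) is contained in a finite set. -/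
lemma hasSum_groupBy {ι κ : Type*} [DecidableEq κ] {f : ι → ℂ} {g : κ → ℂ} {a : ℂ}
    (π : ι → κ) (S : κ → Finset ι)
    (hmem : ∀ x, f x ≠ 0 → x ∈ S (π x))
    (hπ : ∀ b, ∀ x ∈ S b, π x = b)
    (hsum : ∀ b, ∑ x ∈ S b, f x = g b)
    (h : HasSum f a) : HasSum g a := by
  classical
  have h' : HasSum (fun p : Σ b : κ, {x : ι // π x = b} => f p.2.1) a :=
    (Equiv.hasSum_iff (Equiv.sigmaFiberEquiv π)).2 h
  refine HasSum.sigma h' fun b => ?_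
  have hfin : HasSum (fun c : {x : ι // π x = b} => f c.1)
      (∑ c ∈ (S b).subtype (fun x => π x = b), f c.1) := by
    refine hasSum_sum_of_ne_finset_zero fun c hc => ?_
    by_contra hne
    refine hc (Finset.mem_subtype.mpr ?_)
    have := hmem c.1 hne
    rwa [c.2] at this
  have : ∑ c ∈ (S b).subtype (fun x => π x = b), f c.1 = g b := by
    rw [Finset.sum_subtype_eq_sum_filter, Finset.filter_true_of_mem (hπ b), hsum b]
  exact this ▸ hfin

lemma natcast_mul_cpow (m n : ℕ) (c : ℂ) : ((m * n : ℕ) : ℂ) ^ c = (m : ℂ) ^ c * (n : ℂ) ^ c := by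
  push_cast
  exact natCast_mul_natCast_cpow m n c

lemma cpow_split {x : ℂ} (hx : x ≠ 0) (u v : ℂ) :
    x ^ (-(1 + (u + v))) = x⁻¹ * (x ^ (-u) * x ^ (-v)) := by
  rw [show -(1 + (u + v)) = (-1) + (-u + -v) by ring, cpow_add _ _ hx, cpow_add _ _ hx,
    cpow_neg_one]

lemma sum_divisors_moebius (n : ℕ) :
    (∑ d ∈ n.divisors, ((μ d : ℤ) : ℂ)) = if n = 1 then 1 else 0 := by
  have h := congrArg (fun f : ArithmeticFunction ℤ => f n) moebius_mul_coe_zeta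
  simp only [coe_mul_zeta_apply, one_apply] at h
  have : (∑ d ∈ n.divisors, (μ d : ℤ)) = if n = 1 then 1 else 0 := h
  calc (∑ d ∈ n.divisors, ((μ d : ℤ) : ℂ)) = ((∑ d ∈ n.divisors, μ d : ℤ) : ℂ) := by push_cast; rfl
    _ = if n = 1 then 1 else 0 := by rw [this]; split <;> simp


/-- coprime-pair term -/
noncomputable def cpterm (u v : ℂ) (p : ℕ × ℕ) : ℂ :=
  if p.1 ≠ 0 ∧ p.2 ≠ 0 ∧ Nat.Coprime p.1 p.2 then (p.1 : ℂ) ^ (-(1 + u)) * (p.2 : ℂ) ^ (-(1 + v))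
  else 0


set_option maxHeartbeats 1000000 in
lemma hasSum_cpterm {u v : ℂ} (hu : 0 < u.re) (hv : 0 < v.re) :
    HasSum (cpterm u v)
      ((riemannZeta (2 + (u + v)))⁻¹ * (riemannZeta (1 + u) * riemannZeta (1 + v))) := by
  have h5 : 1 < (2 + (u + v)).re := by simp [Complex.add_re]; linarith
  have a1 := (hasSum_zterm hu).mul (hasSum_zterm hv)
      (summable_mul_of_summable_norm (summable_norm_zterm hu) (summable_norm_zterm hv))
  have sm := summable_mul_of_summable_norm (summable_norm_mterm h5)
      ((summable_norm_zterm hu).mul_norm (summable_norm_zterm hv))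
  have a2 := (hasSum_mterm h5).mul a1 sm
  have hW : HasSum (fun q : ℕ × (ℕ × ℕ) => mterm (2 + (u + v)) q.1 *
      (zterm u q.2.1 * zterm v q.2.2))
      ((riemannZeta (2 + (u + v)))⁻¹ * (riemannZeta (1 + u) * riemannZeta (1 + v))) := a2
  refine hasSum_groupBy (fun q => (q.1 * q.2.1, q.1 * q.2.2))
    (fun b => (Nat.gcd b.1 b.2).divisors.image (fun d => (d, (b.1 / d, b.2 / d)))) ?_ ?_ ?_ hW
  · rintro ⟨d, e, f⟩ hne
    have hd : d ≠ 0 := by rintro rfl; simp [mterm] at hne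
    have he : e ≠ 0 := by rintro rfl; simp [zterm] at hne
    have hf : f ≠ 0 := by rintro rfl; simp [zterm] at hne
    refine Finset.mem_image.mpr ⟨d, ?_, ?_⟩
    · rw [Nat.mem_divisors, Nat.gcd_mul_left]
      exact ⟨Dvd.intro _ rfl, Nat.mul_ne_zero hd (Nat.gcd_ne_zero_left he)⟩
    · simp [Nat.mul_div_cancel_left _ (Nat.pos_of_ne_zero hd)]
  · rintro ⟨r, s⟩ x hx
    obtain ⟨d, hd, rfl⟩ := Finset.mem_image.mp hx
    rw [Nat.mem_divisors] at hd
    have h1 : d ∣ r := hd.1.trans (Nat.gcd_dvd_left _ _)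
    have h2 : d ∣ s := hd.1.trans (Nat.gcd_dvd_right _ _)
    simp [Nat.mul_div_cancel' h1, Nat.mul_div_cancel' h2]
  · rintro ⟨r, s⟩
    rcases eq_or_ne r 0 with rfl | hr
    · rw [show cpterm u v (0, s) = 0 by simp [cpterm]]
      refine Finset.sum_eq_zero fun x hx => ?_
      obtain ⟨d, hd, rfl⟩ := Finset.mem_image.mp hx
      simp [zterm, Nat.zero_div]
    rcases eq_or_ne s 0 with rfl | hs
    · rw [show cpterm u v (r, 0) = 0 by simp [cpterm]]
      refine Finset.sum_eq_zero fun x hx => ?_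
      obtain ⟨d, hd, rfl⟩ := Finset.mem_image.mp hx
      simp [zterm, Nat.zero_div]
    have hg : Nat.gcd r s ≠ 0 := Nat.gcd_ne_zero_left hr
    rw [Finset.sum_image (by intro x hx y hy hxy; exact (Prod.mk.injEq _ _ _ _ ▸ hxy).1)]
    have key : ∀ d ∈ (Nat.gcd r s).divisors,
        mterm (2 + (u + v)) d * (zterm u (r / d) * zterm v (s / d)) =
        ((μ d : ℤ) : ℂ) * ((r : ℂ) ^ (-(1 + u)) * (s : ℂ) ^ (-(1 + v))) := by
      intro d hd
      rw [Nat.mem_divisors] at hd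
      have hdr : d ∣ r := hd.1.trans (Nat.gcd_dvd_left _ _)
      have hds : d ∣ s := hd.1.trans (Nat.gcd_dvd_right _ _)
      have hd0 : d ≠ 0 := by rintro rfl; exact hg (Nat.eq_zero_of_zero_dvd hd.1 ▸ rfl)
      have hrd : r / d ≠ 0 := by
        intro h; apply hr; rw [← Nat.mul_div_cancel' hdr, h, Nat.mul_zero]
      have hsd : s / d ≠ 0 := by
        intro h; apply hs; rw [← Nat.mul_div_cancel' hds, h, Nat.mul_zero]
      rw [mterm, if_neg hd0, zterm, if_neg hrd, zterm, if_neg hsd]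
      have hr' : ((r : ℂ)) ^ (-(1+u)) = (d : ℂ) ^ (-(1+u)) * ((r/d : ℕ) : ℂ) ^ (-(1+u)) := by
        rw [← natcast_mul_cpow, Nat.mul_div_cancel' hdr]
      have hs' : ((s : ℂ)) ^ (-(1+v)) = (d : ℂ) ^ (-(1+v)) * ((s/d : ℕ) : ℂ) ^ (-(1+v)) := by
        rw [← natcast_mul_cpow, Nat.mul_div_cancel' hds]
      have hdc : (d : ℂ) ≠ 0 := Nat.cast_ne_zero.mpr hd0
      have hsplit : (d : ℂ) ^ (-(2 + (u + v))) = (d : ℂ) ^ (-(1+u)) * (d : ℂ) ^ (-(1+v)) := by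
        rw [← cpow_add _ _ hdc]; ring_nf
      rw [hr', hs', hsplit]; ring
    rw [Finset.sum_congr rfl key, ← Finset.sum_mul, sum_divisors_moebius]
    by_cases hc : Nat.Coprime r s
    · rw [if_pos hc, show cpterm u v (r, s) = (r : ℂ) ^ (-(1 + u)) * (s : ℂ) ^ (-(1 + v)) by
        simp [cpterm, hr, hs, hc], one_mul]
    · rw [if_neg (fun h => hc h), show cpterm u v (r, s) = 0 by simp [cpterm, hc], zero_mul]


/-- the quadruple-sum function -/
noncomputable def Qfun (α β γ δ : ℂ) : ℕ × ((ℕ × ℕ) × ℕ) → ℂ := fun q =>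
  zterm (α + γ) q.1 * (cpterm (α + δ) (β + γ) q.2.1 * zterm (β + δ) q.2.2)

/-- the function on pairs of factorizations -/
noncomputable def Vfun (α β γ δ : ℂ) : (ℕ × ℕ) × ℕ × ℕ → ℂ := fun x =>
  if x.1.1 * x.1.2 = x.2.1 * x.2.2 ∧ x.1.1 * x.1.2 ≠ 0 then
    (x.1.1 : ℂ) ^ (-α) * (x.1.2 : ℂ) ^ (-β) * ((x.2.1 : ℂ) ^ (-γ) * (x.2.2 : ℂ) ^ (-δ)) *
      ((x.1.1 * x.1.2 : ℕ) : ℂ)⁻¹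
  else 0

lemma zterm_ne_zero {c : ℂ} {n : ℕ} : zterm c n ≠ 0 ↔ n ≠ 0 := by
  rcases eq_or_ne n 0 with rfl | hn
  · simp [zterm]
  · simp [zterm, hn, cpow_eq_zero_iff]

lemma Qfun_ne_zero {α β γ δ : ℂ} {q : ℕ × ((ℕ × ℕ) × ℕ)} : Qfun α β γ δ q ≠ 0 ↔
    q.1 ≠ 0 ∧ q.2.1.1 ≠ 0 ∧ q.2.1.2 ≠ 0 ∧ q.2.2 ≠ 0 ∧ Nat.Coprime q.2.1.1 q.2.1.2 := by
  obtain ⟨a, ⟨r, s⟩, t⟩ := q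
  simp only [Qfun, mul_ne_zero_iff, zterm_ne_zero]
  constructor
  · rintro ⟨ha, ⟨hcp, ht⟩⟩
    rw [cpterm] at hcp
    by_cases hc : r ≠ 0 ∧ s ≠ 0 ∧ Nat.Coprime r s
    · exact ⟨ha, hc.1, hc.2.1, ht, hc.2.2⟩
    · rw [if_neg hc] at hcp; exact absurd rfl hcp
  · rintro ⟨ha, hr, hs, ht, hco⟩
    refine ⟨ha, ⟨?_, ht⟩⟩
    rw [cpterm, if_pos ⟨hr, hs, hco⟩]
    exact mul_ne_zero (by simp [cpow_eq_zero_iff, hr]) (by simp [cpow_eq_zero_iff, hs])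

lemma hasSum_Vfun {α β γ δ : ℂ} {A : ℂ} (hQ : HasSum (Qfun α β γ δ) A) :
    HasSum (Vfun α β γ δ) A := by
  refine (hasSum_iff_hasSum_of_ne_zero_bij
    (i := fun x => ((x.1.1 * x.1.2.1.1, x.1.2.1.2 * x.1.2.2),
                    (x.1.1 * x.1.2.1.2, x.1.2.1.1 * x.1.2.2))) ?_ ?_ ?_).mpr hQ
  · -- injectivity
    rintro ⟨⟨a, ⟨r, s⟩, t⟩, hx⟩ ⟨⟨a', ⟨r', s'⟩, t'⟩, hy⟩ hxy
    obtain ⟨ha, hr, hs, ht, hco⟩ := Qfun_ne_zero.mp hx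
    obtain ⟨ha', hr', hs', ht', hco'⟩ := Qfun_ne_zero.mp hy
    simp only [Prod.mk.injEq] at hxy
    obtain ⟨⟨e1, e2⟩, e3, e4⟩ := hxy
    have haa : a = a' := by
      have g1 : Nat.gcd (a * r) (a * s) = a := by
        rw [Nat.gcd_mul_left, Nat.Coprime.gcd_eq_one hco, Nat.mul_one]
      have g2 : Nat.gcd (a' * r') (a' * s') = a' := by
        rw [Nat.gcd_mul_left, Nat.Coprime.gcd_eq_one hco', Nat.mul_one]
      rw [← g1, e1, e3, g2]
    subst haa
    have hrr : r = r' := Nat.eq_of_mul_eq_mul_left (Nat.pos_of_ne_zero ha) e1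
    have hss : s = s' := Nat.eq_of_mul_eq_mul_left (Nat.pos_of_ne_zero ha) e3
    subst hrr; subst hss
    have htt : t = t' := Nat.eq_of_mul_eq_mul_left (Nat.pos_of_ne_zero hr) e4
    subst htt
    rfl
  · -- support V ⊆ range
    rintro ⟨⟨h, k⟩, u', v⟩ hx
    rw [Function.mem_support, Vfun] at hx
    have hcond : h * k = u' * v ∧ h * k ≠ 0 := by
      by_contra hc; rw [if_neg hc] at hx; exact hx rfl
    obtain ⟨heq, hne⟩ := hcond
    have hh : h ≠ 0 := fun h0 => hne (by rw [h0, Nat.zero_mul])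
    have hk : k ≠ 0 := fun h0 => hne (by rw [h0, Nat.mul_zero])
    have hu : u' ≠ 0 := fun h0 => hne (by rw [heq, h0, Nat.zero_mul])
    have hv : v ≠ 0 := fun h0 => hne (by rw [heq, h0, Nat.mul_zero])
    have hapos : 0 < Nat.gcd h u' := Nat.gcd_pos_of_pos_left _ (Nat.pos_of_ne_zero hh)
    set a := Nat.gcd h u' with hadef
    set r := h / a with hrdef
    set s := u' / a with hsdef
    have hco : Nat.Coprime r s := Nat.coprime_div_gcd_div_gcd hapos
    have har : a * r = h := Nat.mul_div_cancel' (Nat.gcd_dvd_left h u')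
    have has : a * s = u' := Nat.mul_div_cancel' (Nat.gcd_dvd_right h u')
    have hr0 : r ≠ 0 := fun h0 => hh (by rw [← har, h0, Nat.mul_zero])
    have hs0 : s ≠ 0 := fun h0 => hu (by rw [← has, h0, Nat.mul_zero])
    have hrk : r * k = s * v := by
      have : a * (r * k) = a * (s * v) := by
        rw [← Nat.mul_assoc, ← Nat.mul_assoc, har, has, heq]
      exact Nat.eq_of_mul_eq_mul_left hapos this
    have hsk : s ∣ k := by
      have h1 : s ∣ r * k := ⟨v, hrk⟩
      exact (Nat.Coprime.dvd_of_dvd_mul_left (hco.symm) h1)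
    set t := k / s with htdef
    have hst : s * t = k := Nat.mul_div_cancel' hsk
    have ht0 : t ≠ 0 := fun h0 => hk (by rw [← hst, h0, Nat.mul_zero])
    have hrt : r * t = v := by
      have : s * (r * t) = s * v := by
        rw [Nat.mul_left_comm, hst, hrk]
      exact Nat.eq_of_mul_eq_mul_left (Nat.pos_of_ne_zero hs0) this
    refine ⟨⟨(a, (r, s), t), Qfun_ne_zero.mpr ⟨Nat.pos_of_ne_zero ?_ |>.ne',
      hr0, hs0, ht0, hco⟩⟩, ?_⟩
    · exact Nat.gcd_ne_zero_left hh
    · simp only [har, has, hst, hrt]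
  · -- values agree
    rintro ⟨⟨a, ⟨r, s⟩, t⟩, hx⟩
    obtain ⟨ha, hr, hs, ht, hco⟩ := Qfun_ne_zero.mp hx
    simp only [Vfun, Qfun]
    rw [if_pos ⟨by ring, Nat.mul_ne_zero (Nat.mul_ne_zero ha hr) (Nat.mul_ne_zero hs ht)⟩]
    have na : (a : ℂ) ≠ 0 := Nat.cast_ne_zero.mpr ha
    have nr : (r : ℂ) ≠ 0 := Nat.cast_ne_zero.mpr hr
    have ns : (s : ℂ) ≠ 0 := Nat.cast_ne_zero.mpr hs
    have nt : (t : ℂ) ≠ 0 := Nat.cast_ne_zero.mpr ht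
    rw [zterm, if_neg ha, zterm, if_neg ht, cpterm, if_pos ⟨hr, hs, hco⟩]
    rw [natcast_mul_cpow, natcast_mul_cpow, natcast_mul_cpow, natcast_mul_cpow]
    rw [cpow_split na α γ, cpow_split nr α δ, cpow_split ns β γ, cpow_split nt β δ]
    push_cast
    rw [mul_inv, mul_inv, mul_inv]
    ring

lemma hasSum_tau {α β γ δ : ℂ} {A : ℂ} (hV : HasSum (Vfun α β γ δ) A) :
    HasSum (fun n : ℕ => tauShift α β n * tauShift γ δ n / (n : ℂ)) A := by
  refine hasSum_groupBy (fun x => x.1.1 * x.1.2)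
    (fun n => n.divisorsAntidiagonal ×ˢ n.divisorsAntidiagonal) ?_ ?_ ?_ hV
  · rintro ⟨⟨h, k⟩, u, v⟩ hne
    rw [Vfun] at hne
    have hcond : h * k = u * v ∧ h * k ≠ 0 := by
      by_contra hc; rw [if_neg hc] at hne; exact hne rfl
    exact Finset.mem_product.mpr ⟨Nat.mem_divisorsAntidiagonal.mpr ⟨rfl, hcond.2⟩,
      Nat.mem_divisorsAntidiagonal.mpr ⟨hcond.1.symm, hcond.2⟩⟩
  · rintro n ⟨⟨h, k⟩, u, v⟩ hx
    exact (Nat.mem_divisorsAntidiagonal.mp (Finset.mem_product.mp hx).1).1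
  · intro n
    rcases eq_or_ne n 0 with rfl | hn
    · simp [tauShift]
    · rw [Finset.sum_product]
      have key : ∀ p ∈ n.divisorsAntidiagonal,
          (∑ q ∈ n.divisorsAntidiagonal, Vfun α β γ δ (p, q)) =
          ((p.1 : ℂ) ^ (-α) * (p.2 : ℂ) ^ (-β)) * (tauShift γ δ n * (n : ℂ)⁻¹) := by
        intro p hp
        obtain ⟨hpn, -⟩ := Nat.mem_divisorsAntidiagonal.mp hp
        have inner : ∀ q ∈ n.divisorsAntidiagonal, Vfun α β γ δ (p, q) =
            ((p.1 : ℂ) ^ (-α) * (p.2 : ℂ) ^ (-β)) * (((q.1 : ℂ) ^ (-γ) * (q.2 : ℂ) ^ (-δ)) *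
            (n : ℂ)⁻¹) := by
          intro q hq
          obtain ⟨hqn, -⟩ := Nat.mem_divisorsAntidiagonal.mp hq
          rw [Vfun]
          simp only
          rw [if_pos ⟨by rw [hpn, hqn], by rw [hpn]; exact hn⟩, hpn]
          ring
        rw [Finset.sum_congr rfl inner, ← Finset.mul_sum, ← Finset.sum_mul]
        rfl
      rw [Finset.sum_congr rfl key, ← Finset.sum_mul]
      rw [div_eq_mul_inv, mul_assoc]
      rfl


lemma summable_norm_cpterm {u v : ℂ} (hu : 0 < u.re) (hv : 0 < v.re) :
    Summable fun p => ‖cpterm u v p‖ := by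
  have h := (summable_norm_zterm hu).mul_norm (summable_norm_zterm hv)
  have hb : ∀ p : ℕ × ℕ, ‖cpterm u v p‖ ≤ ‖zterm u p.1 * zterm v p.2‖ := by
    intro p
    by_cases hc : p.1 ≠ 0 ∧ p.2 ≠ 0 ∧ Nat.Coprime p.1 p.2
    · rw [cpterm, if_pos hc, zterm, if_neg hc.1, zterm, if_neg hc.2.1]
    · rw [cpterm, if_neg hc, norm_zero]
      positivity
  exact Summable.of_nonneg_of_le (fun _ => norm_nonneg _) hb h

lemma hasSum_Qfun {α β γ δ : ℂ}
    (h1 : 0 < (α + γ).re) (h2 : 0 < (α + δ).re) (h3 : 0 < (β + γ).re) (h4 : 0 < (β + δ).re) :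
    HasSum (Qfun α β γ δ)
      (riemannZeta (1 + (α + γ)) * ((riemannZeta (2 + ((α + δ) + (β + γ))))⁻¹ *
        (riemannZeta (1 + (α + δ)) * riemannZeta (1 + (β + γ))) * riemannZeta (1 + (β + δ)))) := by
  have hCP := hasSum_cpterm h2 h3
  have sm1 := summable_mul_of_summable_norm (summable_norm_cpterm h2 h3) (summable_norm_zterm h4)
  have inner := hCP.mul (hasSum_zterm h4) sm1
  have sm2 := summable_mul_of_summable_norm (summable_norm_zterm h1)
    ((summable_norm_cpterm h2 h3).mul_norm (summable_norm_zterm h4))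
  have hQ := (hasSum_zterm h1).mul inner sm2
  exact hQ

end TauAux

end TauAuxSection

/-- Shifted Ramanujan identity: for `Re(α+γ), Re(α+δ), Re(β+γ), Re(β+δ) > 0`,
`∑_{n=1}^∞ τ_{α,β}(n) τ_{γ,δ}(n) n^{−1}` converges and equals
`ζ(1+α+γ) ζ(1+α+δ) ζ(1+β+γ) ζ(1+β+δ) / ζ(2+α+β+γ+δ)`. -/
theorem tauShift_correlation_series (α β γ δ : ℂ)
    (h1 : 0 < (α + γ).re) (h2 : 0 < (α + δ).re) (h3 : 0 < (β + γ).re) (h4 : 0 < (β + δ).re) :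
    HasSum (fun n : ℕ => tauShift α β n * tauShift γ δ n / (n : ℂ))
      (riemannZeta (1 + α + γ) * riemannZeta (1 + α + δ) * riemannZeta (1 + β + γ) *
        riemannZeta (1 + β + δ) / riemannZeta (2 + α + β + γ + δ)) := by
  have hQ := TauAux.hasSum_Qfun h1 h2 h3 h4
  have hV := TauAux.hasSum_Vfun hQ
  have hT := TauAux.hasSum_tau hV
  convert hT using 1
  rw [show (1:ℂ) + α + γ = 1 + (α + γ) by ring, show (1:ℂ) + α + δ = 1 + (α + δ) by ring,
      show (1:ℂ) + β + γ = 1 + (β + γ) by ring, show (1:ℂ) + β + δ = 1 + (β + δ) by ring,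
      show (2:ℂ) + α + β + γ + δ = 2 + ((α + δ) + (β + γ)) by ring, div_eq_mul_inv]
  ring
end

section
/- For 0 < Re w < 1 and u > 0, ∫_0^∞ (iv)^w e^{−2πvu} dv/v + ∫_0^∞ (−iv)^w e^{−2πvu} dv/v = 2 cos(πw/2) (2π)^{−w} Γ(w) u^{−w}, where (±iv)^w is defined using the principal branch of the logarithm. -/
open Complex Real MeasureTheory

lemma rotated_integrand_eq (w : ℂ) (u : ℝ) (c : ℂ) (hc : c ≠ 0) (hlog : Complex.log c = c.arg * Complex.I)
    {v : ℝ} (hv : 0 < v) :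
    (c * v) ^ w * Complex.exp (-2 * Real.pi * v * u) / v
      = Complex.exp (c.arg * Complex.I * w) *
        ((v : ℂ) ^ (w - 1) * Complex.exp (-(((2 * Real.pi * u : ℝ) : ℂ) * v))) := by
  have hv0 : (v : ℂ) ≠ 0 := Complex.ofReal_ne_zero.mpr hv.ne'
  have h1 : (c * v) ^ w = Complex.exp (c.arg * Complex.I * w) * (v : ℂ) ^ w := by
    rw [Complex.cpow_def_of_ne_zero (mul_ne_zero hc hv0), mul_comm c (v : ℂ),
      Complex.log_ofReal_mul hv hc, hlog, add_mul, Complex.exp_add,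
      Complex.cpow_def_of_ne_zero hv0, Complex.ofReal_log hv.le, mul_comm]
  have h2 : (v : ℂ) ^ w / v = (v : ℂ) ^ (w - 1) := by
    rw [Complex.cpow_sub _ _ hv0, Complex.cpow_one]
  have h3 : (-2 * (Real.pi : ℂ) * v * u) = -(((2 * Real.pi * u : ℝ) : ℂ) * v) := by
    push_cast; ring
  rw [h1, h3, ← h2]
  ring

/-- For `0 < Re w < 1` and `u > 0`:
`∫_0^∞ (iv)^w e^{−2πvu} dv/v + ∫_0^∞ (−iv)^w e^{−2πvu} dv/v
  = 2 cos(πw/2) (2π)^{−w} Γ(w) u^{−w}`. -/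
theorem rotated_gamma_integrals (w : ℂ) (hw0 : 0 < w.re) (hw1 : w.re < 1)
    (u : ℝ) (hu : 0 < u) :
    (∫ v in Set.Ioi (0 : ℝ), (Complex.I * v) ^ w * Complex.exp (-2 * Real.pi * v * u) / v) +
      (∫ v in Set.Ioi (0 : ℝ), (-(Complex.I) * v) ^ w * Complex.exp (-2 * Real.pi * v * u) / v)
      = 2 * Complex.cos (Real.pi * w / 2) * (2 * Real.pi : ℂ) ^ (-w) * Complex.Gamma w *
        (u : ℂ) ^ (-w) := by
  have hr : (0 : ℝ) < 2 * Real.pi * u := by positivity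
  have hbase := integral_cpow_mul_exp_neg_mul_Ioi (a := w) hw0 hr
  have hIlog : Complex.log Complex.I = (Complex.I.arg : ℂ) * Complex.I := by
    rw [Complex.log_I, Complex.arg_I]; push_cast; ring
  have hnIlog : Complex.log (-Complex.I) = ((-Complex.I).arg : ℂ) * Complex.I := by
    rw [Complex.log_neg_I, Complex.arg_neg_I]; push_cast; ring
  have e1 : (∫ v in Set.Ioi (0 : ℝ), (Complex.I * v) ^ w * Complex.exp (-2 * Real.pi * v * u) / v)
      = Complex.exp ((Complex.I.arg : ℂ) * Complex.I * w) * ((1 / ((2 * Real.pi * u : ℝ) : ℂ)) ^ w * Complex.Gamma w) := by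
    rw [← hbase, ← integral_const_mul]
    exact setIntegral_congr_fun measurableSet_Ioi fun v hv =>
      rotated_integrand_eq w u Complex.I Complex.I_ne_zero hIlog hv
  have e2 : (∫ v in Set.Ioi (0 : ℝ), (-Complex.I * v) ^ w * Complex.exp (-2 * Real.pi * v * u) / v)
      = Complex.exp (((-Complex.I).arg : ℂ) * Complex.I * w) * ((1 / ((2 * Real.pi * u : ℝ) : ℂ)) ^ w * Complex.Gamma w) := by
    rw [← hbase, ← integral_const_mul]
    exact setIntegral_congr_fun measurableSet_Ioi fun v hv =>
      rotated_integrand_eq w u (-Complex.I) (neg_ne_zero.mpr Complex.I_ne_zero) hnIlog hv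
  rw [e1, e2, Complex.arg_I, Complex.arg_neg_I]
  have hcos : Complex.exp ((Real.pi / 2 : ℝ) * Complex.I * w)
      + Complex.exp (((-(Real.pi / 2)) : ℝ) * Complex.I * w) = 2 * Complex.cos (Real.pi * w / 2) := by
    rw [Complex.cos]
    push_cast
    ring_nf
  have hpow : (1 / ((2 * Real.pi * u : ℝ) : ℂ)) ^ w = (2 * Real.pi : ℂ) ^ (-w) * (u : ℂ) ^ (-w) := by
    have harg : Complex.arg ((2 * Real.pi * u : ℝ) : ℂ) ≠ Real.pi := by
      rw [Complex.arg_ofReal_of_nonneg hr.le]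
      exact Real.pi_ne_zero.symm
    rw [one_div, Complex.inv_cpow _ _ harg, ← Complex.cpow_neg,
      show ((2 * Real.pi * u : ℝ) : ℂ) = ((2 * Real.pi : ℝ) : ℂ) * ((u : ℝ) : ℂ) by push_cast; ring,
      Complex.mul_cpow_ofReal_nonneg (by positivity) hu.le]
    push_cast
    ring
  rw [hpow]
  rw [← hcos]
  ring
end
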